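/- For κ ∈ (0,1), any root z of Q(z; κ) = e^z (1 + z²/κ²) - (1 + z) with Re z > 0 satisfies |z| < 2κ. -/

import Mathlib

/-- For `κ ∈ (0,1)`, any root of `Q(z;κ)` with `Re z > 0` satisfies `|z| < 2κ`. -/
theorem Q_root_bound (κ : ℝ) (hκ0 : 0 < κ) (hκ1 : κ < 1) (z : ℂ)
    (hz : 0 < z.re)
    (hQ : Complex.exp z * (1 + z ^ 2 / (κ : ℂ) ^ 2) - (1 + z) = 0) :
    ‖z‖ < 2 * κ := by
  set r := ‖z‖ with hr
  have hrnn : 0 ≤ r := norm_nonneg z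
  have hexp : Complex.exp z ≠ 0 := Complex.exp_ne_zero z
  have h1 : (1 + z ^ 2 / (κ : ℂ) ^ 2) = (1 + z) * Complex.exp (-z) := by
    have := sub_eq_zero.mp hQ
    rw [Complex.exp_neg]
    field_simp
    linear_combination this
  have habs1 : ‖1 + z ^ 2 / (κ : ℂ) ^ 2‖
      = ‖1 + z‖ * Real.exp (-z.re) := by
    rw [h1, norm_mul, Complex.norm_exp, Complex.neg_re]
  have h2 : ‖1 + z‖ ≤ 1 + r := by
    calc ‖1 + z‖ ≤ ‖(1:ℂ)‖ + ‖z‖ := norm_add_le _ _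
    _ = 1 + r := by simp [hr]
  have h3 : Real.exp (-z.re) < 1 := by
    rw [Real.exp_lt_one_iff]; linarith
  have hupper : ‖1 + z ^ 2 / (κ : ℂ) ^ 2‖ < 1 + r := by
    rw [habs1]
    calc ‖1 + z‖ * Real.exp (-z.re) ≤ (1 + r) * Real.exp (-z.re) := by
          exact mul_le_mul_of_nonneg_right h2 (Real.exp_pos _).le
    _ < (1 + r) * 1 := by
          exact mul_lt_mul_of_pos_left h3 (by linarith)
    _ = 1 + r := by ring
  have habs2 : ‖z ^ 2 / (κ : ℂ) ^ 2‖ = r ^ 2 / κ ^ 2 := by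
    rw [norm_div, norm_pow, norm_pow]
    simp [hr, Complex.norm_real, abs_of_pos hκ0]
  have hlower : r ^ 2 / κ ^ 2 - 1 ≤ ‖1 + z ^ 2 / (κ : ℂ) ^ 2‖ := by
    have : ‖z ^ 2 / (κ : ℂ) ^ 2‖ ≤ ‖1 + z ^ 2 / (κ : ℂ) ^ 2‖ + 1 := by
      calc ‖z ^ 2 / (κ : ℂ) ^ 2‖
          = ‖(1 + z ^ 2 / (κ : ℂ) ^ 2) + (-1)‖ := by ring_nf
        _ ≤ ‖1 + z ^ 2 / (κ : ℂ) ^ 2‖ + ‖-1‖ := norm_add_le _ _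
        _ = ‖1 + z ^ 2 / (κ : ℂ) ^ 2‖ + 1 := by simp
    rw [habs2] at this
    linarith
  have hkey : r ^ 2 < κ ^ 2 * (2 + r) := by
    have h4 : r ^ 2 / κ ^ 2 < 2 + r := by linarith
    have hκ2 : 0 < κ ^ 2 := by positivity
    calc r ^ 2 = (r ^ 2 / κ ^ 2) * κ ^ 2 := by field_simp
    _ < (2 + r) * κ ^ 2 := by exact mul_lt_mul_of_pos_right h4 hκ2
    _ = κ ^ 2 * (2 + r) := by ring
  by_contra hle
  push_neg at hle
  nlinarith [mul_nonneg (sub_nonneg.mpr hle) (sub_pos.mpr hκ1).le, hκ0.le, mul_pos hκ0 hκ0]
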